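/- Let {U_i}_{i ∈ I} be a finite set of d×d unitary matrices satisfying tr(U_i† U_j) = 0 for all i ≠ j, and let T be a mixed unitary map T(X) = ∑_{i ∈ I} r_i U_i X U_i† with real coefficients r_i satisfying ∑_i r_i = 1. Then ν(T) = log₂(∑_{i ∈ I} |r_i|) = log₂(‖J_T‖₁ / d), where J_T is the Choi matrix of T. -/

import Mathlib

open scoped Kronecker ComplexOrder
open Matrix

noncomputable section

/-- `id_k ⊗ N` applied blockwise. -/
def idTensor {n m : Type*} (k : Type*)
    (N : Matrix n n ℂ → Matrix m m ℂ)
    (M : Matrix (k × n) (k × n) ℂ) : Matrix (k × m) (k × m) ℂ :=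
  Matrix.of fun p q => N (Matrix.of fun a b => M (p.1, a) (q.1, b)) p.2 q.2

/-- Trace-preserving. -/
def IsTP {n m : Type*} [Fintype n] [Fintype m]
    (N : Matrix n n ℂ → Matrix m m ℂ) : Prop :=
  ∀ X, (N X).trace = X.trace

/-- Hermitian-preserving. -/
def IsHP {n m : Type*} (N : Matrix n n ℂ → Matrix m m ℂ) : Prop :=
  ∀ X, X.IsHermitian → (N X).IsHermitian

/-- Completely positive: for every `k`, `id_k ⊗ N` preserves positive semidefiniteness. -/
def IsCP {n m : Type*} [Fintype n] [Fintype m]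
    (N : Matrix n n ℂ → Matrix m m ℂ) : Prop :=
  ∀ (k : ℕ) (M : Matrix (Fin k × n) (Fin k × n) ℂ),
    M.PosSemidef → (idTensor (Fin k) N M).PosSemidef

/-- Completely positive and trace-preserving (quantum channel). -/
def IsCPTP {n m : Type*} [Fintype n] [Fintype m]
    (N : Matrix n n ℂ → Matrix m m ℂ) : Prop :=
  IsLinearMap ℂ N ∧ IsCP N ∧ IsTP N

/-- Completely positive and trace non-increasing. -/
def IsCPTN {n m : Type*} [Fintype n] [Fintype m]
    (N : Matrix n n ℂ → Matrix m m ℂ) : Prop :=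
  IsLinearMap ℂ N ∧ IsCP N ∧ ∀ X : Matrix n n ℂ, X.PosSemidef → (N X).trace ≤ X.trace

/-- Costs of finite quasiprobability decompositions of `N` into CPTP maps. -/
def decompCosts {n m : Type*} [Fintype n] [Fintype m]
    (N : Matrix n n ℂ → Matrix m m ℂ) : Set ℝ :=
  { c | ∃ (s : ℕ) (η : Fin s → ℝ) (O : Fin s → (Matrix n n ℂ → Matrix m m ℂ)),
      (∀ i, IsCPTP (O i)) ∧ (∀ X, N X = ∑ i, (η i : ℂ) • O i X) ∧ c = ∑ i, |η i| }

/-- The physical implementability `ν(N)`. -/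
noncomputable def nu {n m : Type*} [Fintype n] [Fintype m]
    (N : Matrix n n ℂ → Matrix m m ℂ) : ℝ :=
  Real.logb 2 (sInf (decompCosts N))

/-- The Choi matrix of a linear map. -/
def choiMatrix {n m : Type*} [DecidableEq n]
    (N : Matrix n n ℂ → Matrix m m ℂ) : Matrix (n × m) (n × m) ℂ :=
  Matrix.of fun p q => N (Matrix.single p.1 q.1 1) p.2 q.2

/-- Partial trace over the second tensor factor. -/
def ptraceB {n m : Type*} [Fintype m] (J : Matrix (n × m) (n × m) ℂ) :
    Matrix n n ℂ :=
  Matrix.of fun i j => ∑ a, J (i, a) (j, a)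

/-- The trace norm of a matrix. -/
noncomputable def traceNorm {k : Type*} [Fintype k] [DecidableEq k]
    (X : Matrix k k ℂ) : ℝ :=
  (((Matrix.posSemidef_conjTranspose_mul_self X).isHermitian.eigenvectorUnitary : Matrix k k ℂ) *
    Matrix.diagonal ((fun x : ℝ => (x : ℂ)) ∘ Real.sqrt ∘
      (Matrix.posSemidef_conjTranspose_mul_self X).isHermitian.eigenvalues) *
    (star ((Matrix.posSemidef_conjTranspose_mul_self X).isHermitian.eigenvectorUnitary :
      Matrix k k ℂ))).trace.re

/-- Tensor product of two maps. -/
def tensorMap {n₁ n₂ m₂ : Type*} [Fintype n₁] [DecidableEq n₁]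
    (M : Matrix n₁ n₁ ℂ → Matrix n₁ n₁ ℂ) (N : Matrix n₂ n₂ ℂ → Matrix m₂ m₂ ℂ)
    (X : Matrix (n₁ × n₂) (n₁ × n₂) ℂ) : Matrix (n₁ × m₂) (n₁ × m₂) ℂ :=
  ∑ i : n₁, ∑ j : n₁,
    (M (Matrix.single i j 1)) ⊗ₖ (N (Matrix.of fun a b => X (i, a) (j, b)))



set_option linter.unusedSectionVars false

variable {ι κ : Type*} [Fintype ι] [DecidableEq ι] [Fintype κ] [DecidableEq κ]

lemma aux_psd_vecMulVec (a : ι → ℂ) : (vecMulVec a (star a)).PosSemidef := by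
  apply PosSemidef.of_dotProduct_mulVec_nonneg
  · ext p q
    simp [vecMulVec, conjTranspose_apply, mul_comm]
  · intro x
    have h1 : (vecMulVec a (star a)) *ᵥ x = (star a ⬝ᵥ x) • a := by
      ext p
      simp only [vecMulVec, mulVec, dotProduct, of_apply, Pi.star_apply, Pi.smul_apply,
        smul_eq_mul]
      rw [Finset.sum_mul]
      exact Finset.sum_congr rfl fun _ _ => by ring
    rw [h1]
    have hsx : star x ⬝ᵥ a = star (star a ⬝ᵥ x) := by
      simp [dotProduct, mul_comm]
    have h2 : star x ⬝ᵥ ((star a ⬝ᵥ x) • a) = star (star a ⬝ᵥ x) * (star a ⬝ᵥ x) := by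
      rw [dotProduct_smul, smul_eq_mul, hsx]
      ring
    rw [h2]
    exact star_mul_self_nonneg _

lemma aux_smul_psd {M : Matrix ι ι ℂ} (h : M.PosSemidef) {t : ℝ} (ht : 0 ≤ t) :
    ((t : ℂ) • M).PosSemidef := by
  apply PosSemidef.of_dotProduct_mulVec_nonneg
  · have : ((t : ℂ) • M)ᴴ = (t : ℂ) • M := by
      rw [conjTranspose_smul, h.1.eq]
      congr 1
      simp [RCLike.star_def]
    exact this
  · intro x
    rw [smul_mulVec, dotProduct_smul]
    exact smul_nonneg (by exact_mod_cast ht) (h.dotProduct_mulVec_nonneg x)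

lemma aux_trace_psd_nonneg {M : Matrix ι ι ℂ} (h : M.PosSemidef) : 0 ≤ M.trace := by
  rw [Matrix.trace]
  apply Finset.sum_nonneg
  intro i _
  have := h.dotProduct_mulVec_nonneg (Pi.single i 1)
  simpa [Matrix.mulVec_single, dotProduct, Pi.single_apply] using this

lemma aux_trace_mul_psd_nonneg {A B : Matrix ι ι ℂ} (hA : A.PosSemidef) (hB : B.PosSemidef) :
    0 ≤ (A * B).trace := by
  obtain ⟨C, rfl⟩ : ∃ C : Matrix ι ι ℂ, B = Cᴴ * C := by
    open scoped MatrixOrder in exact CStarAlgebra.nonneg_iff_eq_star_mul_self.mp hB.nonneg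
  have : (A * (Cᴴ * C)).trace = (C * A * Cᴴ).trace := by
    rw [← Matrix.mul_assoc, Matrix.trace_mul_cycle]
  rw [this]
  exact aux_trace_psd_nonneg (hA.mul_mul_conjTranspose_same C)

lemma aux_vecMulVec_mul_vecMulVec (a b c e : ι → ℂ) :
    vecMulVec a b * vecMulVec c e = (b ⬝ᵥ c) • vecMulVec a e := by
  ext p q
  simp only [Matrix.mul_apply, vecMulVec_apply, Matrix.smul_apply, smul_eq_mul, dotProduct]
  rw [Finset.sum_mul]
  congr 1
  ext k
  ring

lemma aux_trace_vecMulVec (a b : ι → ℂ) : (vecMulVec a b).trace = b ⬝ᵥ a := by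
  simp [Matrix.trace, vecMulVec_apply, dotProduct, mul_comm]


section step2
variable {d : ℕ}

/-- Unitary conjugation is CPTP. -/
lemma aux_cptp_unitary (U : Matrix (Fin d) (Fin d) ℂ) (hU : U ∈ Matrix.unitaryGroup (Fin d) ℂ) :
    IsCPTP (fun X : Matrix (Fin d) (Fin d) ℂ => U * X * Uᴴ) := by
  have hUU : Uᴴ * U = 1 := by
    simpa [Matrix.star_eq_conjTranspose] using (Unitary.mem_iff.mp hU).1
  refine ⟨⟨fun X Y => by noncomm_ring, fun c X => by
      simp [Matrix.mul_smul, Matrix.smul_mul]⟩, ?_, ?_⟩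
  · intro k M hM
    have h1 : ∀ (p y : Fin k × Fin d),
        (((1 : Matrix (Fin k) (Fin k) ℂ) ⊗ₖ U) * M) p y = ∑ b, U p.2 b * M (p.1, b) y := by
      intro p y
      rw [Matrix.mul_apply, Fintype.sum_prod_type, Finset.sum_comm]
      congr 1; ext b
      simp only [Matrix.kroneckerMap_apply, Matrix.one_apply, ite_mul, one_mul, zero_mul]
      rw [Finset.sum_ite_eq]
      simp
    have h2 : ∀ (N : Matrix (Fin k × Fin d) (Fin k × Fin d) ℂ) (p q : Fin k × Fin d),
        (N * ((1 : Matrix (Fin k) (Fin k) ℂ) ⊗ₖ U)ᴴ) p q = ∑ e, N p (q.1, e) * star (U q.2 e) := by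
      intro N p q
      rw [Matrix.mul_apply, Fintype.sum_prod_type, Finset.sum_comm]
      congr 1; ext e
      simp only [Matrix.conjTranspose_apply, Matrix.kroneckerMap_apply, Matrix.one_apply,
        ite_mul, one_mul, zero_mul, apply_ite (star : ℂ → ℂ), star_zero, mul_ite, mul_zero]
      rw [Finset.sum_ite_eq]
      simp
    have hkey : idTensor (Fin k) (fun X => U * X * Uᴴ) M
        = ((1 : Matrix (Fin k) (Fin k) ℂ) ⊗ₖ U) * M * ((1 : Matrix (Fin k) (Fin k) ℂ) ⊗ₖ U)ᴴ := by
      ext p q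
      rw [h2]
      simp only [h1]
      simp only [idTensor, Matrix.of_apply, Matrix.mul_apply, Matrix.conjTranspose_apply]
    rw [hkey]
    exact hM.mul_mul_conjTranspose_same _
  · intro X
    calc (U * X * Uᴴ).trace = (Uᴴ * U * X).trace := by rw [Matrix.trace_mul_cycle]
    _ = X.trace := by rw [hUU, Matrix.one_mul]


/-- The Choi matrix of a CP map is PSD. -/
lemma aux_choi_psd (O : Matrix (Fin d) (Fin d) ℂ → Matrix (Fin d) (Fin d) ℂ)
    (hCP : IsCP O) : (choiMatrix O).PosSemidef := by
  set w : Fin d × Fin d → ℂ := fun p => if p.1 = p.2 then 1 else 0 with hw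
  have hΩ : (vecMulVec w (star w)).PosSemidef := aux_psd_vecMulVec w
  have := hCP d _ hΩ
  have hkey : idTensor (Fin d) O (vecMulVec w (star w)) = choiMatrix O := by
    ext p q
    simp only [idTensor, choiMatrix, Matrix.of_apply]
    congr 2
    ext a b
    simp only [Matrix.of_apply, vecMulVec_apply, Pi.star_apply, hw, Matrix.single,
      apply_ite (star : ℂ → ℂ), star_one, star_zero]
    by_cases h1 : p.1 = a <;> by_cases h2 : q.1 = b <;> simp [h1, h2]
  rwa [hkey] at this

/-- The Choi matrix of a linear TP map has trace `d`. -/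
lemma aux_choi_trace (O : Matrix (Fin d) (Fin d) ℂ → Matrix (Fin d) (Fin d) ℂ)
    (hTP : IsTP O) : (choiMatrix O).trace = (d : ℂ) := by
  have : (choiMatrix O).trace = ∑ a : Fin d, (O (Matrix.single a a 1)).trace := by
    rw [Matrix.trace]
    rw [Fintype.sum_prod_type]
    rfl
  rw [this]
  have h2 : ∀ a : Fin d, (O (Matrix.single a a 1)).trace = 1 := by
    intro a
    rw [hTP]
    simp [Matrix.trace, Matrix.single, Matrix.diag]
  simp [h2]

/-- Choi is linear in the map. -/
lemma aux_choi_sum {s : ℕ} (T : Matrix (Fin d) (Fin d) ℂ → Matrix (Fin d) (Fin d) ℂ)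
    (η : Fin s → ℝ) (O : Fin s → (Matrix (Fin d) (Fin d) ℂ → Matrix (Fin d) (Fin d) ℂ))
    (hT : ∀ X, T X = ∑ i, (η i : ℂ) • O i X) :
    choiMatrix T = ∑ i, (η i : ℂ) • choiMatrix (O i) := by
  ext p q
  simp [choiMatrix, hT, Matrix.sum_apply]

end step2

lemma aux_conj_std {d : ℕ} (U : Matrix (Fin d) (Fin d) ℂ) (a b c e : Fin d) :
    (U * Matrix.single a b (1:ℂ) * Uᴴ) c e = U c a * star (U e b) := by
  simp only [Matrix.mul_apply, Matrix.single, Matrix.conjTranspose_apply, Matrix.of_apply,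
    mul_ite, mul_one, mul_zero, ite_mul, zero_mul, ite_and]
  simp [Finset.sum_ite_eq, apply_ite (· * star (U e ·))]

open scoped MatrixOrder in
lemma aux_traceNorm_eq {k : Type*} [Fintype k] [DecidableEq k] (X K : Matrix k k ℂ)
    (hK : K.PosSemidef) (h : K * K = Xᴴ * X) : traceNorm X = K.trace.re := by
  have hX := Matrix.posSemidef_conjTranspose_mul_self X
  have e1 : ((hX.isHermitian.eigenvectorUnitary : Matrix k k ℂ) *
      Matrix.diagonal ((fun x : ℝ => (x : ℂ)) ∘ Real.sqrt ∘ hX.isHermitian.eigenvalues) *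
      (star (hX.isHermitian.eigenvectorUnitary : Matrix k k ℂ))) = cfc Real.sqrt (Xᴴ * X) := by
    rw [hX.isHermitian.cfc_eq]; rfl
  unfold traceNorm
  rw [e1, ← cfcₙ_eq_cfc, ← CFC.sqrt_eq_real_sqrt _ hX.nonneg, CFC.sqrt_unique h hK.nonneg]

/-- for a mixed unitary map `T = ∑ᵢ rᵢ Uᵢ · Uᵢ†` with mutually
trace-orthogonal unitaries and `∑ᵢ rᵢ = 1`,
`ν(T) = log₂(∑ᵢ |rᵢ|) = log₂(‖J_T‖₁ / d)`. -/
theorem nu_mixed_unitary {d s : ℕ} (hd : 0 < d)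
    (U : Fin s → Matrix (Fin d) (Fin d) ℂ)
    (hU : ∀ i, U i ∈ Matrix.unitaryGroup (Fin d) ℂ)
    (horth : ∀ i j, i ≠ j → ((U i)ᴴ * U j).trace = 0)
    (r : Fin s → ℝ) (hr : ∑ i, r i = 1) :
    nu (fun X => ∑ i, (r i : ℂ) • (U i * X * (U i)ᴴ)) = Real.logb 2 (∑ i, |r i|) ∧
    nu (fun X => ∑ i, (r i : ℂ) • (U i * X * (U i)ᴴ)) =
      Real.logb 2 (traceNorm (choiMatrix
        (fun X => ∑ i, (r i : ℂ) • (U i * X * (U i)ᴴ))) / d) := by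
  have hd0 : (d:ℝ) ≠ 0 := Nat.cast_ne_zero.mpr hd.ne'
  set T : Matrix (Fin d) (Fin d) ℂ → Matrix (Fin d) (Fin d) ℂ :=
    fun X => ∑ i, (r i : ℂ) • (U i * X * (U i)ᴴ) with hTdef
  set v : Fin s → (Fin d × Fin d) → ℂ := fun i p => U i p.2 p.1 with hv
  set P : Fin s → Matrix (Fin d × Fin d) (Fin d × Fin d) ℂ :=
    fun i => vecMulVec (v i) (star (v i)) with hPdef
  have hPpsd : ∀ i, (P i).PosSemidef := fun i => aux_psd_vecMulVec _
  have hdot : ∀ i j, star (v i) ⬝ᵥ v j = if i = j then (d:ℂ) else 0 := by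
    intro i j
    have h1 : star (v i) ⬝ᵥ v j = ((U i)ᴴ * (U j)).trace := by
      simp [dotProduct, Matrix.trace, Matrix.diag, Matrix.mul_apply, Fintype.sum_prod_type,
        Matrix.conjTranspose_apply, hv, mul_comm]
    rw [h1]
    by_cases h : i = j
    · subst h
      have : (U i)ᴴ * U i = 1 := by
        simpa [Matrix.star_eq_conjTranspose] using (Unitary.mem_iff.mp (hU i)).1
      simp [this, Matrix.trace_one]
    · simp [h, horth i j h]
  have hPP : ∀ i j, P i * P j = (if i = j then (d:ℂ) else 0) • vecMulVec (v i) (star (v j)) := by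
    intro i j
    rw [hPdef]
    dsimp only
    rw [aux_vecMulVec_mul_vecMulVec, hdot]
  have htrP : ∀ i, (P i).trace = (d:ℂ) := by
    intro i
    rw [hPdef]
    dsimp only
    rw [aux_trace_vecMulVec, hdot]
    simp
  set S : (Fin s → ℝ) → Matrix (Fin d × Fin d) (Fin d × Fin d) ℂ :=
    fun c => ∑ i, ((c i : ℝ) : ℂ) • P i with hSdef
  have hSmul : ∀ a b : Fin s → ℝ, S a * S b = ∑ i, ((a i * b i * d : ℝ) : ℂ) • P i := by
    intro a b
    rw [hSdef]
    dsimp only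
    rw [Finset.sum_mul_sum]
    have h1 : ∀ i j, ((a i : ℂ) • P i) * ((b j : ℂ) • P j)
        = ((a i * b j : ℂ)) • ((if i = j then (d:ℂ) else 0) • vecMulVec (v i) (star (v j))) := by
      intro i j
      rw [smul_mul_smul_comm, hPP]
    simp_rw [h1]
    apply Finset.sum_congr rfl
    intro i _
    rw [Finset.sum_eq_single i]
    · simp only [if_pos rfl, hPdef]
      rw [smul_smul]
      congr 1
      push_cast
      ring
    · intro j _ hji
      rw [if_neg (fun h => hji h.symm)]
      simp
    · intro h; exact absurd (Finset.mem_univ i) h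
  have hJ : choiMatrix T = S r := by
    ext p q
    rw [hSdef]
    simp only [choiMatrix, Matrix.of_apply, hTdef, Matrix.sum_apply, Matrix.smul_apply,
      smul_eq_mul]
    apply Finset.sum_congr rfl
    intro i _
    rw [aux_conj_std]
    simp [hPdef, hv, vecMulVec_apply]
  have hSH : ∀ c : Fin s → ℝ, (S c).IsHermitian := by
    intro c
    rw [hSdef]
    dsimp only
    unfold Matrix.IsHermitian
    rw [Matrix.conjTranspose_sum]
    apply Finset.sum_congr rfl
    intro i _
    rw [Matrix.conjTranspose_smul, (hPpsd i).1.eq]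
    congr 1
    simp [RCLike.star_def]
  have hSpsd : ∀ c : Fin s → ℝ, (∀ i, 0 ≤ c i) → (S c).PosSemidef := by
    intro c hc
    rw [hSdef]
    dsimp only
    induction (Finset.univ : Finset (Fin s)) using Finset.induction with
    | empty => simpa using Matrix.PosSemidef.zero
    | insert _ _ hnotmem ih =>
      rw [Finset.sum_insert hnotmem]
      exact (aux_smul_psd (hPpsd _) (hc _)).add ih
  have hStr : ∀ c : Fin s → ℝ, (S c).trace = (((∑ i, c i * d : ℝ)) : ℂ) := by
    intro c
    rw [hSdef]
    dsimp only
    rw [Matrix.trace_sum]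
    push_cast
    apply Finset.sum_congr rfl
    intro i _
    rw [Matrix.trace_smul, htrP]
    simp
  -- trace norm computation
  have hKpsd : (S (fun i => |r i|)).PosSemidef := hSpsd _ (fun i => abs_nonneg _)
  have hK2 : (S (fun i => |r i|)) ^ 2 = (choiMatrix T)ᴴ * (choiMatrix T) := by
    rw [pow_two, hJ, (hSH r).eq, hSmul, hSmul]
    apply Finset.sum_congr rfl
    intro i _
    congr 2
    rw [abs_mul_abs_self]
  have hsqrt : traceNorm (choiMatrix T) = (S (fun i => |r i|)).trace.re :=
    aux_traceNorm_eq _ _ hKpsd (by rw [← pow_two]; exact hK2)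
  have htn : traceNorm (choiMatrix T) = (∑ i, |r i|) * d := by
    rw [hsqrt, hStr]
    rw [Complex.ofReal_re, Finset.sum_mul]
  -- the dual witness W
  set sg : Fin s → ℝ := fun i => if 0 ≤ r i then (1:ℝ) else -1 with hsg
  have hsgr : ∀ i, sg i * r i = |r i| := by
    intro i
    rw [hsg]
    dsimp only
    split_ifs with h
    · rw [one_mul, abs_of_nonneg h]
    · rw [neg_one_mul, abs_of_neg (lt_of_not_ge h)]
  have hsub : ∀ a b : Fin s → ℝ, S a - S b = S (fun i => a i - b i) := by
    intro a b
    rw [hSdef]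
    dsimp only
    rw [← Finset.sum_sub_distrib]
    apply Finset.sum_congr rfl
    intro i _
    rw [← sub_smul]
    push_cast
    rfl
  have hQpsd : ((d:ℂ) • (1 : Matrix (Fin d × Fin d) (Fin d × Fin d) ℂ)
      - S (fun _ => 1)).PosSemidef := by
    set M := (d:ℂ) • (1 : Matrix (Fin d × Fin d) (Fin d × Fin d) ℂ) - S (fun _ => 1) with hM
    have hQQ : S (fun _ => 1) * S (fun _ => 1) = (d:ℂ) • S (fun _ => 1) := by
      rw [hSmul, hSdef]
      dsimp only
      rw [Finset.smul_sum]
      apply Finset.sum_congr rfl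
      intro i _
      rw [smul_smul]
      congr 1
      push_cast
      ring
    have hMH : Mᴴ = M := by
      rw [hM, Matrix.conjTranspose_sub, Matrix.conjTranspose_smul, Matrix.conjTranspose_one,
        (hSH _).eq]
      congr 1
      simp [RCLike.star_def]
    have hM2 : M * M = (d:ℂ) • M := by
      rw [hM]
      simp only [Matrix.sub_mul, Matrix.mul_sub, Matrix.smul_mul, Matrix.mul_smul,
        Matrix.one_mul, Matrix.mul_one, hQQ]
      module
    have hfin : (((d:ℝ)⁻¹ : ℝ) : ℂ) • (Mᴴ * M) = M := by
      rw [hMH, hM2, smul_smul]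
      rw [show ((((d:ℝ)⁻¹ : ℝ)) : ℂ) * (d:ℂ) = 1 by push_cast; field_simp]
      rw [one_smul]
    exact hfin ▸ aux_smul_psd (Matrix.posSemidef_conjTranspose_mul_self M) (by positivity)
  have hplus : ((d:ℂ) • (1 : Matrix (Fin d × Fin d) (Fin d × Fin d) ℂ) - S sg).PosSemidef := by
    have he : (d:ℂ) • (1 : Matrix (Fin d × Fin d) (Fin d × Fin d) ℂ) - S sg
        = ((d:ℂ) • 1 - S (fun _ => 1)) + S (fun i => 1 - sg i) := by
      rw [← hsub]
      abel
    rw [he]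
    refine hQpsd.add (hSpsd _ ?_)
    intro i
    rw [hsg]
    dsimp only
    split_ifs <;> norm_num
  have hminus : ((d:ℂ) • (1 : Matrix (Fin d × Fin d) (Fin d × Fin d) ℂ) + S sg).PosSemidef := by
    have hnegS : S (fun i => - sg i) = - S sg := by
      rw [hSdef]
      dsimp only
      rw [← Finset.sum_neg_distrib]
      apply Finset.sum_congr rfl
      intro i _
      push_cast
      rw [← neg_smul]
    have he : (d:ℂ) • (1 : Matrix (Fin d × Fin d) (Fin d × Fin d) ℂ) + S sg
        = ((d:ℂ) • 1 - S (fun _ => 1)) + S (fun i => 1 - (- sg i)) := by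
      have h2 : S (fun i => 1 - (- sg i)) = S (fun _ => 1) - S (fun i => - sg i) := (hsub _ _).symm
      rw [h2, hnegS]
      abel
    rw [he]
    refine hQpsd.add (hSpsd _ ?_)
    intro i
    rw [hsg]
    dsimp only
    split_ifs <;> norm_num
  -- lower bound on any decomposition cost
  have hlb : ∀ c ∈ decompCosts T, (∑ i, |r i|) ≤ c := by
    rintro c ⟨m, η, O, hO, hOT, rfl⟩
    have hJpsd : ∀ α, (choiMatrix (O α)).PosSemidef := fun α => aux_choi_psd _ ((hO α).2.1)
    have hJtr : ∀ α, (choiMatrix (O α)).trace = (d:ℂ) := fun α => aux_choi_trace _ ((hO α).2.2)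
    have hWJle : ∀ α, |((S sg * choiMatrix (O α)).trace).re| ≤ (d:ℝ) * d := by
      intro α
      have h1 : 0 ≤ ((((d:ℂ) • 1 - S sg)) * choiMatrix (O α)).trace :=
        aux_trace_mul_psd_nonneg hplus (hJpsd α)
      have h2 : 0 ≤ ((((d:ℂ) • 1 + S sg)) * choiMatrix (O α)).trace :=
        aux_trace_mul_psd_nonneg hminus (hJpsd α)
      have e1 : ((((d:ℂ) • 1 - S sg)) * choiMatrix (O α)).trace
          = (((d:ℝ) * d : ℝ) : ℂ) - (S sg * choiMatrix (O α)).trace := by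
        rw [Matrix.sub_mul, Matrix.trace_sub, Matrix.smul_mul, Matrix.one_mul,
          Matrix.trace_smul, hJtr]
        simp only [smul_eq_mul]
        push_cast
        ring
      have e2 : ((((d:ℂ) • 1 + S sg)) * choiMatrix (O α)).trace
          = (((d:ℝ) * d : ℝ) : ℂ) + (S sg * choiMatrix (O α)).trace := by
        rw [Matrix.add_mul, Matrix.trace_add, Matrix.smul_mul, Matrix.one_mul,
          Matrix.trace_smul, hJtr]
        simp only [smul_eq_mul]
        push_cast
        ring
      rw [e1, Complex.le_def] at h1
      rw [e2, Complex.le_def] at h2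
      have h1' := h1.1
      have h2' := h2.1
      simp only [Complex.zero_re, Complex.sub_re, Complex.add_re, Complex.ofReal_re] at h1' h2'
      exact abs_le.mpr ⟨by linarith, by linarith⟩
    have hchoi : choiMatrix T = ∑ α, (η α : ℂ) • choiMatrix (O α) := aux_choi_sum T η O hOT
    have hWJ : (S sg * choiMatrix T).trace = (((∑ i, |r i|) * ((d:ℝ) * d) : ℝ) : ℂ) := by
      rw [hJ, hSmul, Matrix.trace_sum]
      simp_rw [Matrix.trace_smul, htrP, smul_eq_mul]
      have hre : ∑ i, (sg i * r i * d) * d = (∑ i, |r i|) * ((d:ℝ) * d) := by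
        rw [Finset.sum_mul]
        apply Finset.sum_congr rfl
        intro i _
        rw [← hsgr i]
        ring
      rw [← hre]
      push_cast
      apply Finset.sum_congr rfl
      intro i _
      ring
    have hWJ2 : (S sg * choiMatrix T).trace
        = ∑ α, (η α : ℂ) * ((S sg * choiMatrix (O α)).trace) := by
      rw [hchoi, Finset.mul_sum, Matrix.trace_sum]
      apply Finset.sum_congr rfl
      intro α _
      rw [Matrix.mul_smul, Matrix.trace_smul, smul_eq_mul]
    have hre2 : (∑ i, |r i|) * ((d:ℝ) * d)
        = ∑ α, η α * ((S sg * choiMatrix (O α)).trace).re := by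
      have := congrArg Complex.re (hWJ.symm.trans hWJ2)
      simpa [Complex.ofReal_re, Complex.re_sum, Complex.re_ofReal_mul] using this
    have hineq : (∑ i, |r i|) * ((d:ℝ) * d) ≤ (∑ α, |η α|) * ((d:ℝ) * d) := by
      rw [hre2, Finset.sum_mul]
      apply Finset.sum_le_sum
      intro α _
      calc η α * ((S sg * choiMatrix (O α)).trace).re
          ≤ |η α * ((S sg * choiMatrix (O α)).trace).re| := le_abs_self _
        _ = |η α| * |((S sg * choiMatrix (O α)).trace).re| := abs_mul _ _
        _ ≤ |η α| * ((d:ℝ) * d) := mul_le_mul_of_nonneg_left (hWJle α) (abs_nonneg _)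
    have hdd : (0:ℝ) < (d:ℝ) * d := by positivity
    exact le_of_mul_le_mul_right hineq hdd
  have hmem : (∑ i, |r i|) ∈ decompCosts T := by
    refine ⟨s, r, fun i X => U i * X * (U i)ᴴ, fun i => aux_cptp_unitary _ (hU i),
      fun X => rfl, rfl⟩
  have hInf : sInf (decompCosts T) = ∑ i, |r i| :=
    le_antisymm (csInf_le ⟨_, fun c hc => hlb c hc⟩ hmem) (le_csInf ⟨_, hmem⟩ hlb)
  constructor
  · show Real.logb 2 (sInf (decompCosts T)) = _
    rw [hInf]
  · show Real.logb 2 (sInf (decompCosts T)) = _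
    rw [hInf, htn]
    congr 1
    rw [mul_div_assoc, div_self hd0, mul_one]



end
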